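/- For all integers k and l, one has e₁^k · e₂^l = (k, l, kl/2, k²l/12, −kl²/12) in G, where powers are taken with respect to the group structure of G. -/

import Mathlib

/-- The simply connected nilpotent Lie group of type `(2,3,5)` in exponential
coordinates: the underlying set is `ℝ⁵`. -/
@[ext]
structure G235 where
  a : ℝ
  b : ℝ
  c : ℝ
  d : ℝ
  e : ℝ

namespace G235

/-- The Baker–Campbell–Hausdorff multiplication. -/
noncomputable instance : Mul G235 :=
  ⟨fun x y =>
    ⟨x.a + y.a, x.b + y.b,
      x.c + y.c + (x.a * y.b - x.b * y.a) / 2,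
      x.d + y.d + (x.a * y.c - x.c * y.a) / 2 + (x.a - y.a) * (x.a * y.b - x.b * y.a) / 12,
      x.e + y.e + (x.b * y.c - x.c * y.b) / 2 + (x.b - y.b) * (x.a * y.b - x.b * y.a) / 12⟩⟩

instance : One G235 := ⟨⟨0, 0, 0, 0, 0⟩⟩

noncomputable instance : Inv G235 := ⟨fun x => ⟨-x.a, -x.b, -x.c, -x.d, -x.e⟩⟩

@[simp] lemma mul_a (x y : G235) : (x * y).a = x.a + y.a := rfl
@[simp] lemma mul_b (x y : G235) : (x * y).b = x.b + y.b := rfl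
@[simp] lemma mul_c (x y : G235) :
    (x * y).c = x.c + y.c + (x.a * y.b - x.b * y.a) / 2 := rfl
@[simp] lemma mul_d (x y : G235) :
    (x * y).d = x.d + y.d + (x.a * y.c - x.c * y.a) / 2 +
      (x.a - y.a) * (x.a * y.b - x.b * y.a) / 12 := rfl
@[simp] lemma mul_e (x y : G235) :
    (x * y).e = x.e + y.e + (x.b * y.c - x.c * y.b) / 2 +
      (x.b - y.b) * (x.a * y.b - x.b * y.a) / 12 := rfl
@[simp] lemma one_a : (1 : G235).a = 0 := rfl
@[simp] lemma one_b : (1 : G235).b = 0 := rfl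
@[simp] lemma one_c : (1 : G235).c = 0 := rfl
@[simp] lemma one_d : (1 : G235).d = 0 := rfl
@[simp] lemma one_e : (1 : G235).e = 0 := rfl
@[simp] lemma inv_a (x : G235) : x⁻¹.a = -x.a := rfl
@[simp] lemma inv_b (x : G235) : x⁻¹.b = -x.b := rfl
@[simp] lemma inv_c (x : G235) : x⁻¹.c = -x.c := rfl
@[simp] lemma inv_d (x : G235) : x⁻¹.d = -x.d := rfl
@[simp] lemma inv_e (x : G235) : x⁻¹.e = -x.e := rfl

/-- The BCH multiplication makes `G235` a group with identity `0` and inverse `-x`. -/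
noncomputable instance : Group G235 where
  mul_assoc x y z := by ext <;> simp <;> ring
  one_mul x := by ext <;> simp
  mul_one x := by ext <;> simp
  inv_mul_cancel x := by ext <;> simp <;> ring

/-- `G235` carries the Euclidean topology of `ℝ⁵`. -/
instance : TopologicalSpace G235 :=
  TopologicalSpace.induced (fun x => (x.a, x.b, x.c, x.d, x.e)) inferInstance

/-- The generator `e₁ = (1,0,0,0,0)`. -/
noncomputable def e1 : G235 := ⟨1, 0, 0, 0, 0⟩

/-- The generator `e₂ = (0,1,0,0,0)`. -/
noncomputable def e2 : G235 := ⟨0, 1, 0, 0, 0⟩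

end G235

open G235

lemma e1_zpow (k : ℤ) : e1 ^ k = ⟨(k : ℝ), 0, 0, 0, 0⟩ := by
  induction k using Int.induction_on with
  | zero => simp [e1]; rfl
  | succ n ih => rw [zpow_add_one, ih]; ext <;> simp [e1] <;> push_cast <;> ring
  | pred n ih => rw [zpow_sub_one, ih]; ext <;> simp [e1] <;> push_cast <;> ring

lemma e2_zpow (l : ℤ) : e2 ^ l = ⟨0, (l : ℝ), 0, 0, 0⟩ := by
  induction l using Int.induction_on with
  | zero => simp [e2]; rfl
  | succ n ih => rw [zpow_add_one, ih]; ext <;> simp [e2] <;> push_cast <;> ring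
  | pred n ih => rw [zpow_sub_one, ih]; ext <;> simp [e2] <;> push_cast <;> ring

/-- For all integers `k` and `l`, `e₁^k · e₂^l = (k, l, kl/2, k²l/12, −kl²/12)` in `G`,
powers taken with respect to the group structure of `G`. -/
theorem stmt11 (k l : ℤ) :
    e1 ^ k * e2 ^ l =
      ⟨(k : ℝ), (l : ℝ), (k : ℝ) * (l : ℝ) / 2, (k : ℝ) ^ 2 * (l : ℝ) / 12,
        -((k : ℝ) * (l : ℝ) ^ 2) / 12⟩ := by
  rw [e1_zpow, e2_zpow]; ext <;> simp <;> ring
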